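/- Let X be a finite preordered set, R a commutative ring, and θ a commuting map on the incidence algebra I(X,R). Then for i < j (i.e. i ≤ j and i ≠ j), θ(e_{ij})(x,y) = 0 for all x < y with (x,y) ≠ (i,j); that is, θ(e_{ij}) is a sum of a diagonal element and a scalar multiple of e_{ij}. -/
import Mathlib


variable {X R : Type*} [Preorder X] [LocallyFiniteOrder X] [DecidableEq X] [CommRing R]

/-- Membership in the incidence algebra `I(X,R)`: supported on pairs `x ≤ y`. -/
def IsInc (f : X → X → R) : Prop := ∀ x y : X, ¬ x ≤ y → f x y = 0

/-- The convolution product of the incidence algebra. -/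
def conv (f g : X → X → R) : X → X → R :=
  fun x y => ∑ z ∈ Finset.Icc x y, f x z * g z y

/-- The matrix unit `e_{ij}` of the incidence algebra. -/
def eunit (i j : X) : X → X → R := fun x y => if x = i ∧ y = j then 1 else 0

/-- A commuting map on the incidence algebra: an `R`-linear map `θ : I(X,R) → I(X,R)`
with `[θ(f), f] = 0` for all `f`. -/
structure IsCommMap (θ : (X → X → R) → X → X → R) : Prop where
  map_inc : ∀ f, IsInc f → IsInc (θ f)
  map_add : ∀ f g, IsInc f → IsInc g → θ (f + g) = θ f + θ g
  map_smul : ∀ (r : R) (f), IsInc f → θ (r • f) = r • θ f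
  comm : ∀ f, IsInc f → conv (θ f) f = conv f (θ f)

set_option linter.unusedSectionVars false

lemma isInc_eunit {i j : X} (h : i ≤ j) : IsInc (eunit i j : X → X → R) := by
  intro x y hxy
  unfold eunit
  split_ifs with hc
  · obtain ⟨rfl, rfl⟩ := hc; exact absurd h hxy
  · rfl

lemma isInc_add {f g : X → X → R} (hf : IsInc f) (hg : IsInc g) : IsInc (f + g) := by
  intro x y h
  simp [Pi.add_apply, hf x y h, hg x y h]

lemma conv_eunit_right (f : X → X → R) (i j x y : X) :
    conv f (eunit i j) x y = if y = j ∧ i ∈ Finset.Icc x y then f x i else 0 := by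
  unfold conv eunit
  have hc : ∀ z ∈ Finset.Icc x y,
      f x z * (if z = i ∧ y = j then (1:R) else 0)
        = if z = i then (if y = j then f x i else 0) else 0 := by
    intro z _
    by_cases h1 : z = i
    · subst h1; by_cases h2 : y = j <;> simp [h2]
    · simp [h1]
  rw [Finset.sum_congr rfl hc, Finset.sum_ite_eq' (Finset.Icc x y) i]
  split_ifs <;> first | rfl | tauto

lemma conv_eunit_left (f : X → X → R) (i j x y : X) :
    conv (eunit i j) f x y = if x = i ∧ j ∈ Finset.Icc x y then f j y else 0 := by
  unfold conv eunit
  have hc : ∀ z ∈ Finset.Icc x y,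
      (if x = i ∧ z = j then (1:R) else 0) * f z y
        = if z = j then (if x = i then f j y else 0) else 0 := by
    intro z _
    by_cases h1 : z = j
    · subst h1; by_cases h2 : x = i <;> simp [h2]
    · simp [h1]
  rw [Finset.sum_congr rfl hc, Finset.sum_ite_eq' (Finset.Icc x y) j]
  split_ifs <;> first | rfl | tauto

lemma conv_add_left (f g h : X → X → R) : conv (f + g) h = conv f h + conv g h := by
  funext x y
  unfold conv
  simp [add_mul, Finset.sum_add_distrib]

lemma conv_add_right (f g h : X → X → R) : conv f (g + h) = conv f g + conv f h := by
  funext x y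
  unfold conv
  simp [mul_add, Finset.sum_add_distrib]

lemma bilin {θ : (X → X → R) → X → X → R} (hθ : IsCommMap θ)
    {f g : X → X → R} (hf : IsInc f) (hg : IsInc g) :
    conv (θ f) g + conv (θ g) f = conv g (θ f) + conv f (θ g) := by
  have h := hθ.comm (f + g) (isInc_add hf hg)
  rw [hθ.map_add f g hf hg] at h
  simp only [conv_add_left, conv_add_right] at h
  have h1 := hθ.comm f hf
  have h2 := hθ.comm g hg
  linear_combination h - h1 - h2

/-- `θ(e_aa) a v = 0` for `a ≤ v`, `a ≠ v`. -/
lemma theta_diag_right {θ : (X → X → R) → X → X → R} (hθ : IsCommMap θ)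
    {a v : X} (hav : a ≤ v) (hne : a ≠ v) : θ (eunit a a) a v = 0 := by
  have h := congrFun (congrFun (hθ.comm (eunit a a) (isInc_eunit le_rfl)) a) v
  rw [conv_eunit_right, conv_eunit_left] at h
  simpa [hav, Ne.symm hne, hne] using h.symm

/-- `θ(e_aa) u a = 0` for `u ≤ a`, `u ≠ a`. -/
lemma theta_diag_left {θ : (X → X → R) → X → X → R} (hθ : IsCommMap θ)
    {a u : X} (hua : u ≤ a) (hne : u ≠ a) : θ (eunit a a) u a = 0 := by
  have h := congrFun (congrFun (hθ.comm (eunit a a) (isInc_eunit le_rfl)) u) a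
  rw [conv_eunit_right, conv_eunit_left] at h
  simpa [hua, hne] using h

/-- for `i < j`, `θ(e_{ij})` is diagonal plus a multiple of `e_{ij}`:
`θ(e_{ij})(x,y) = 0` for all `x < y` with `(x,y) ≠ (i,j)`. -/
theorem theta_eij_form [Finite X]
    (θ : (X → X → R) → X → X → R) (hθ : IsCommMap θ) :
    ∀ i j : X, i ≤ j → i ≠ j →
      ∀ x y : X, x ≤ y → x ≠ y → (x, y) ≠ (i, j) → θ (eunit i j) x y = 0 := by
  intro i j hij hijne x y hxy hxyne hne
  have hfinc : IsInc (eunit i j : X → X → R) := isInc_eunit hij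
  by_cases hyj : y = j
  · -- y = j; then x ≠ i. Use g = e_xx.
    subst hyj
    have hxi : x ≠ i := fun h => hne (by rw [h])
    have key := congrFun (congrFun (bilin hθ hfinc (isInc_eunit (le_refl x))) x) y
    simp only [Pi.add_apply, conv_eunit_right, conv_eunit_left] at key
    by_cases hxi' : x ≤ i
    · have hK : θ (eunit x x) x i = 0 := theta_diag_right hθ hxi' hxi
      simpa [Ne.symm hxyne, hxi, hxy, le_refl, hK, Finset.mem_Icc, hxi', hij] using key.symm
    · simpa [Ne.symm hxyne, hxi, hxy, le_refl, Finset.mem_Icc, hxi'] using key.symm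
  · -- y ≠ j. Use g = e_yy.
    have key := congrFun (congrFun (bilin hθ hfinc (isInc_eunit (le_refl y))) x) y
    simp only [Pi.add_apply, conv_eunit_right, conv_eunit_left] at key
    by_cases hxi : x = i
    · subst hxi
      by_cases hjy : j ≤ y
      · have hH : θ (eunit y y) j y = 0 := theta_diag_left hθ hjy (fun h => hyj h.symm)
        simpa [hyj, hxyne, hxy, le_refl, hij, hjy, hH, Finset.mem_Icc] using key
      · simpa [hyj, hxyne, hxy, le_refl, Finset.mem_Icc, hjy] using key
    · simpa [hyj, hxyne, hxy, le_refl, hxi, Finset.mem_Icc] using key
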